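/- Let p_t ∈ (0,1), p_s ∈ (p_t, 1], let D ≥ 1 be an integer and let B ≥ D be a budget. Let F = {w : {1,…,D} → ℕ : w_d ≥ 1 for all d and Σ_{d=1}^{D} w_d ≤ B}, which is a nonempty finite set. Then max_{w ∈ F} Y(q'(w)) > max_{w ∈ F} Y(q(w)), where q(w)_d = 1 − (1−p_t)^{w_d} and q'(w)_d = 1 − (1−p_s)(1−p_t)^{w_d−1}; that is, the best spine-upgraded tree of budget B achieves strictly higher expected yield than the best single-source isotropic tree of the same budget (Proposition 3, Spine Tree Dominance). -/

import Mathlib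

/-- Expected yield of a speculation tree with per-depth advance probabilities
`q_1,…,q_D` (0-indexed here as `q 0, …, q (D-1)`):
`Y(q) = 1 + ∑_{d=1}^{D} ∏_{j=1}^{d} q_j`, including the bonus token. -/
noncomputable def yieldY (D : ℕ) (q : ℕ → ℝ) : ℝ :=
  1 + ∑ d ∈ Finset.range D, ∏ j ∈ Finset.range (d + 1), q j

lemma spine_step (ps pt : ℝ) (hpt0 : 0 < pt) (hpt1 : pt < 1) (hps : pt < ps)
    (k : ℕ) (hk : 1 ≤ k) :
    1 - (1 - pt) ^ k < 1 - (1 - ps) * (1 - pt) ^ (k - 1) := by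
  have h1 : (0:ℝ) < 1 - pt := by linarith
  have hpow : (0:ℝ) < (1 - pt) ^ (k - 1) := pow_pos h1 _
  have hk' : (1 - pt) ^ k = (1 - pt) * (1 - pt) ^ (k - 1) := by
    conv_lhs => rw [← Nat.succ_pred_eq_of_pos hk]
    rw [pow_succ, Nat.pred_eq_sub_one]
    ring
  have : (1 - ps) * (1 - pt) ^ (k - 1) < (1 - pt) * (1 - pt) ^ (k - 1) :=
    mul_lt_mul_of_pos_right (by linarith) hpow
  rw [hk']
  linarith

lemma iso_nonneg (pt : ℝ) (hpt0 : 0 < pt) (hpt1 : pt < 1) (k : ℕ) :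
    0 ≤ 1 - (1 - pt) ^ k := by
  have : (1 - pt) ^ k ≤ 1 := pow_le_one₀ (by linarith) (by linarith)
  linarith

lemma spine_yield_gt (ps pt : ℝ) (hpt0 : 0 < pt) (hpt1 : pt < 1) (hps : pt < ps)
    (D : ℕ) (hD : 1 ≤ D) (w : Fin D → ℕ) (hw : ∀ d, 1 ≤ w d) :
    yieldY D (fun d => if h : d < D then 1 - (1 - pt) ^ (w ⟨d, h⟩) else 1) <
    yieldY D (fun d => if h : d < D then 1 - (1 - ps) * (1 - pt) ^ (w ⟨d, h⟩ - 1) else 1) := by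
  unfold yieldY
  apply add_lt_add_right
  apply Finset.sum_lt_sum
  · intro d hd
    apply Finset.prod_le_prod
    · intro j hj
      have hjD : j < D := lt_of_lt_of_le (Finset.mem_range.mp hj)
        (Nat.succ_le_of_lt (Finset.mem_range.mp hd))
      rw [dif_pos hjD]
      exact iso_nonneg pt hpt0 hpt1 _
    · intro j hj
      have hjD : j < D := lt_of_lt_of_le (Finset.mem_range.mp hj)
        (Nat.succ_le_of_lt (Finset.mem_range.mp hd))
      rw [dif_pos hjD, dif_pos hjD]
      exact le_of_lt (spine_step ps pt hpt0 hpt1 hps _ (hw _))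
  · refine ⟨0, Finset.mem_range.mpr (by omega), ?_⟩
    rw [Finset.prod_range_one, Finset.prod_range_one, dif_pos (by omega : 0 < D),
      dif_pos (by omega : 0 < D)]
    exact spine_step ps pt hpt0 hpt1 hps _ (hw _)

/-- Proposition 3 (Spine Tree Dominance): over the nonempty finite family `F` of width
profiles `w : {1,…,D} → ℕ` with `w_d ≥ 1` and `∑ w_d ≤ B`, the best spine-upgraded tree
(advance probabilities `1 - (1-p_s)(1-p_t)^{w_d-1}`) achieves strictly higher expected
yield than the best single-source isotropic tree (advance probabilities
`1 - (1-p_t)^{w_d}`) at the same budget. -/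
theorem spine_tree_dominance (ps pt : ℝ) (hpt : pt ∈ Set.Ioo (0 : ℝ) 1)
    (hps : ps ∈ Set.Ioc pt 1) (D B : ℕ) (hD : 1 ≤ D) (hB : D ≤ B) :
    ({w : Fin D → ℕ | (∀ d, 1 ≤ w d) ∧ (∑ d, w d) ≤ B}).Nonempty ∧
    ({w : Fin D → ℕ | (∀ d, 1 ≤ w d) ∧ (∑ d, w d) ≤ B}).Finite ∧
    ∃ Miso Mspine : ℝ,
      IsGreatest ((fun w : Fin D → ℕ =>
          yieldY D (fun d => if h : d < D then 1 - (1 - pt) ^ (w ⟨d, h⟩) else 1)) ''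
        {w : Fin D → ℕ | (∀ d, 1 ≤ w d) ∧ (∑ d, w d) ≤ B}) Miso ∧
      IsGreatest ((fun w : Fin D → ℕ =>
          yieldY D (fun d => if h : d < D then
            1 - (1 - ps) * (1 - pt) ^ (w ⟨d, h⟩ - 1) else 1)) ''
        {w : Fin D → ℕ | (∀ d, 1 ≤ w d) ∧ (∑ d, w d) ≤ B}) Mspine ∧
      Miso < Mspine := by
  obtain ⟨hpt0, hpt1⟩ := hpt
  obtain ⟨hps0, hps1⟩ := hps
  set F : Set (Fin D → ℕ) := {w | (∀ d, 1 ≤ w d) ∧ (∑ d, w d) ≤ B} with hFdef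
  have hne : F.Nonempty := ⟨fun _ => 1, fun d => le_refl 1, by simpa using hB⟩
  have hfin : F.Finite := by
    apply Set.Finite.subset (Set.finite_Icc (fun _ : Fin D => 0) (fun _ => B))
    intro w hw
    refine ⟨fun d => Nat.zero_le _, fun d => ?_⟩
    calc w d ≤ ∑ d, w d := Finset.single_le_sum (fun i _ => Nat.zero_le _) (Finset.mem_univ d)
    _ ≤ B := hw.2
  refine ⟨hne, hfin, ?_⟩
  set fIso := fun w : Fin D → ℕ =>
      yieldY D (fun d => if h : d < D then 1 - (1 - pt) ^ (w ⟨d, h⟩) else 1) with hIso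
  set fSp := fun w : Fin D → ℕ =>
      yieldY D (fun d => if h : d < D then
        1 - (1 - ps) * (1 - pt) ^ (w ⟨d, h⟩ - 1) else 1) with hSp
  obtain ⟨a, ha, hamax⟩ := Set.exists_max_image F fIso hfin hne
  obtain ⟨b, hb, hbmax⟩ := Set.exists_max_image F fSp hfin hne
  refine ⟨fIso a, fSp b, ⟨⟨a, ha, rfl⟩, ?_⟩, ⟨⟨b, hb, rfl⟩, ?_⟩, ?_⟩
  · rintro _ ⟨c, hc, rfl⟩; exact hamax c hc
  · rintro _ ⟨c, hc, rfl⟩; exact hbmax c hc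
  · calc fIso a < fSp a := spine_yield_gt ps pt hpt0 hpt1 hps0 D hD a ha.1
    _ ≤ fSp b := hbmax a ha
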